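/- If j : ZFSet → ZFSet satisfies the pair-tagging recursion, then j is an embedding of (ZFSet, ∈) into itself: for all x, y : ZFSet, x ∈ y if and only if j(x) ∈ j(y). -/
import Mathlib


/-- A function `j : ZFSet → ZFSet` satisfies the pair-tagging recursion if
`j y = { j x : x ∈ y } ∪ {{∅, y}}`, i.e. `z ∈ j y ↔ (∃ x ∈ y, z = j x) ∨ z = {∅, y}`. -/
def PairTagging (j : ZFSet → ZFSet) : Prop :=
  ∀ y z : ZFSet, z ∈ j y ↔ ((∃ x ∈ y, z = j x) ∨ z = ({∅, y} : ZFSet))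

lemma pt_empty_notMem (j : ZFSet → ZFSet) (hj : PairTagging j) (x : ZFSet) :
    (∅ : ZFSet) ∉ j x := by
  intro h
  rcases (hj x ∅).1 h with ⟨w, _, hw⟩ | hw
  · have : ({∅, w} : ZFSet) ∈ j w := (hj w _).2 (Or.inr rfl)
    rw [← hw] at this
    exact ZFSet.notMem_empty _ this
  · have : (∅ : ZFSet) ∈ ({∅, x} : ZFSet) := ZFSet.mem_insert_iff.2 (Or.inl rfl)
    rw [← hw] at this
    exact ZFSet.notMem_empty _ this

lemma pt_ne_pair (j : ZFSet → ZFSet) (hj : PairTagging j) (x y : ZFSet) :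
    j x ≠ ({∅, y} : ZFSet) := by
  intro h
  have : (∅ : ZFSet) ∈ j x := by
    rw [h]; exact ZFSet.mem_insert_iff.2 (Or.inl rfl)
  exact pt_empty_notMem j hj x this

lemma pt_inj (j : ZFSet → ZFSet) (hj : PairTagging j) {x x' : ZFSet}
    (h : j x = j x') : x = x' := by
  have hx : ({∅, x} : ZFSet) ∈ j x' := by
    rw [← h]; exact (hj x _).2 (Or.inr rfl)
  rcases (hj x' _).1 hx with ⟨w, _, hw⟩ | hw
  · exact absurd hw.symm (pt_ne_pair j hj w x)
  · have h1 : x ∈ ({∅, x'} : ZFSet) := by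
      rw [← hw]; exact ZFSet.mem_insert_iff.2 (Or.inr (ZFSet.mem_insert_iff.2 (Or.inl rfl)))
    have h2 : x' ∈ ({∅, x} : ZFSet) := by
      rw [hw]; exact ZFSet.mem_insert_iff.2 (Or.inr (ZFSet.mem_insert_iff.2 (Or.inl rfl)))
    simp only [ZFSet.mem_insert_iff, ZFSet.mem_singleton] at h1 h2
    rcases h1 with h1 | h1 <;> rcases h2 with h2 | h2 <;> first | exact h1 | exact h2.symm | (rw [h1, h2])

/-- Any function satisfying the pair-tagging recursion is an embedding of `(ZFSet, ∈)`
into itself: `x ∈ y ↔ j x ∈ j y`. -/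
theorem pairTagging_embedding (j : ZFSet → ZFSet) (hj : PairTagging j) :
    ∀ x y : ZFSet, x ∈ y ↔ j x ∈ j y := by
  intro x y
  constructor
  · intro h
    exact (hj y _).2 (Or.inl ⟨x, h, rfl⟩)
  · intro h
    rcases (hj y _).1 h with ⟨w, hw, hjw⟩ | hw
    · rw [pt_inj j hj hjw]; exact hw
    · exact absurd hw (pt_ne_pair j hj x y)
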